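/- Let p_r(y) = t(y; m, σ_r, ν_r) be Student-t densities sharing a common location m, with pairwise distinct scale-tail pairs (σ_r, ν_r), σ_r > 0, ν_r > 0. If Σ_{r=1}^R π_r p_r(y) = Σ_{r=1}^R π'_r p'_r(y) for all y ∈ ℝ, where both weight vectors have strictly positive entries summing to one and both families have pairwise distinct parameter pairs, then R = R' and there is a permutation ρ of {1,...,R} with π'_r = π_{ρ(r)}, σ'_r = σ_{ρ(r)}, and ν'_r = ν_{ρ(r)} for all r. -/

import Mathlib

open Complex in
lemma analyticAt_rlog {x : ℝ} (hx : 0 < x) : AnalyticAt ℝ Real.log x := by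
  have h1 : AnalyticAt ℝ (fun t : ℝ => (Complex.log ((t : ℂ))).re) x := by
    exact (Complex.reCLM.analyticAt _).comp
      (((analyticAt_clog (Or.inl (by exact_mod_cast hx))).restrictScalars).comp
        (Complex.ofRealCLM.analyticAt _))
  apply h1.congr
  filter_upwards [eventually_gt_nhds hx] with t ht
  rw [← Complex.ofReal_log ht.le, Complex.ofReal_re]

lemma analyticAt_rpow_term {a s : ℝ} (c : ℝ) {x : ℝ} (hx : 0 < a + x) :
    AnalyticAt ℝ (fun t : ℝ => c * (a + t) ^ (-s)) x := by
  have h1 : AnalyticAt ℝ (fun t : ℝ => c * Real.exp (Real.log (a + t) * (-s))) x := by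
    apply AnalyticAt.mul (analyticAt_const)
    exact (((analyticAt_rlog hx).comp ((analyticAt_const).add (analyticAt_id))).mul
      analyticAt_const).rexp
  apply h1.congr
  filter_upwards [(continuous_const.add continuous_id).continuousAt.eventually_mem
    (Ioi_mem_nhds hx : Set.Ioi (0:ℝ) ∈ nhds (a + x))] with t ht
  change 0 < a + t at ht
  rw [Real.rpow_def_of_pos ht]


lemma tendsto_add_Ioi (A : ℝ) : Filter.Tendsto (fun t : ℝ => A + t)
    (nhdsWithin (-A) (Set.Ioi (-A))) (nhdsWithin 0 (Set.Ioi 0)) := by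
  apply tendsto_nhdsWithin_of_tendsto_nhds_of_eventually_within
  · have : Filter.Tendsto (fun t : ℝ => A + t) (nhds (-A)) (nhds (A + -A)) :=
      Filter.tendsto_id.const_add A
    have := this.mono_left (nhdsWithin_le_nhds (s := Set.Ioi (-A)))
    simpa using this
  · filter_upwards [self_mem_nhdsWithin] with t ht
    simp only [Set.mem_Ioi] at ht ⊢
    linarith

lemma tendsto_rpow_zero {e : ℝ} (he : 0 < e) :
    Filter.Tendsto (fun x : ℝ => x ^ e) (nhdsWithin 0 (Set.Ioi 0)) (nhds 0) := by
  have h := (Real.continuousAt_rpow_const 0 e (Or.inr he.le)).tendsto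
  rw [Real.zero_rpow he.ne'] at h
  exact h.mono_left nhdsWithin_le_nhds

lemma rpow_indep : ∀ (F : Finset (ℝ × ℝ)) (c : ℝ × ℝ → ℝ),
    (∀ p ∈ F, 0 < p.1) → (∀ p ∈ F, 0 < p.2) →
    (∀ t : ℝ, 0 ≤ t → ∑ p ∈ F, c p * (p.1 + t) ^ (-p.2) = 0) → ∀ p ∈ F, c p = 0 := by
  intro F
  induction F using Finset.strongInduction with
  | _ F ih =>
    intro c ha hs h p hp
    classical
    have hFne : F.Nonempty := ⟨p, hp⟩
    set A := (F.image Prod.fst).min' (hFne.image _) with hAdef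
    obtain ⟨pa, hpa, hpaA⟩ := Finset.mem_image.1 ((F.image Prod.fst).min'_mem (hFne.image _))
    rw [← hAdef] at hpaA
    have hA_pos : 0 < A := by rw [← hpaA]; exact ha pa hpa
    have hA_le : ∀ q ∈ F, A ≤ q.1 := fun q hq =>
      Finset.min'_le _ _ (Finset.mem_image_of_mem _ hq)
    set G := F.filter (fun q => q.1 = A) with hGdef
    have hGne : G.Nonempty := ⟨pa, Finset.mem_filter.2 ⟨hpa, hpaA⟩⟩
    set s0 := (G.image Prod.snd).max' (hGne.image _) with hs0def
    obtain ⟨p0, hp0G, hp0s⟩ := Finset.mem_image.1 ((G.image Prod.snd).max'_mem (hGne.image _))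
    rw [← hs0def] at hp0s
    have hp0F : p0 ∈ F := (Finset.mem_filter.1 hp0G).1
    have hp0A : p0.1 = A := by
      have := (Finset.mem_filter.1 hp0G).2
      simpa using this
    have hs0_pos : 0 < s0 := by rw [← hp0s]; exact hs p0 hp0F
    have hbase : ∀ q ∈ F, ∀ x ∈ Set.Ioi (-A), 0 < q.1 + x := by
      intro q hq x hx
      have h1 := hA_le q hq
      simp only [Set.mem_Ioi] at hx
      linarith
    set g : ℝ → ℝ := fun t => ∑ q ∈ F, c q * (q.1 + t) ^ (-q.2) with hgdef
    have hg : AnalyticOnNhd ℝ g (Set.Ioi (-A)) := by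
      intro x hx
      exact Finset.analyticAt_fun_sum F (fun q hq => analyticAt_rpow_term (c q) (hbase q hq x hx))
    have h0 : Set.EqOn g 0 (Set.Ioi (-A)) := by
      apply hg.eqOn_zero_of_preconnected_of_eventuallyEq_zero isPreconnected_Ioi
        (show (1:ℝ) ∈ Set.Ioi (-A) by simp only [Set.mem_Ioi]; linarith)
      filter_upwards [Ioi_mem_nhds (zero_lt_one)] with t ht
      exact h t (le_of_lt ht)
    set φ : ℝ → ℝ := fun t => (A + t) ^ s0 * g t with hφdef
    have hmemIoi : ∀ t ∈ Set.Ioi (-A), 0 < A + t := by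
      intro t ht; simp only [Set.mem_Ioi] at ht; linarith
    have hφlim : Filter.Tendsto φ (nhdsWithin (-A) (Set.Ioi (-A))) (nhds (c p0)) := by
      have hsum : (∑ q ∈ F, if q = p0 then c p0 else 0) = c p0 := by
        rw [Finset.sum_ite_eq' F p0 (fun _ => c p0)]; simp [hp0F]
      have hts : Filter.Tendsto (fun t => ∑ q ∈ F, (A + t) ^ s0 * (c q * (q.1 + t) ^ (-q.2)))
          (nhdsWithin (-A) (Set.Ioi (-A))) (nhds (∑ q ∈ F, if q = p0 then c p0 else 0)) := by
        apply tendsto_finset_sum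
        intro q hq
        by_cases hqp : q = p0
        · simp only [if_pos hqp]
          apply Filter.Tendsto.congr' _ tendsto_const_nhds
          filter_upwards [self_mem_nhdsWithin] with t ht
          have hpos : 0 < A + t := hmemIoi t ht
          rw [hqp]
          have h1 : (A + t) ^ s0 * (p0.1 + t) ^ (-p0.2) = 1 := by
            rw [hp0A, hp0s, ← Real.rpow_add hpos, add_neg_cancel, Real.rpow_zero]
          rw [mul_left_comm, h1, mul_one]
        · simp only [if_neg hqp]
          by_cases hqA : q.1 = A
          · -- q ∈ G, q.2 < s0
            have hqG : q ∈ G := Finset.mem_filter.2 ⟨hq, hqA⟩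
            have hle : q.2 ≤ s0 := Finset.le_max' _ _ (Finset.mem_image_of_mem _ hqG)
            have hne : q.2 ≠ s0 := by
              intro hcon
              apply hqp
              exact Prod.ext (by rw [hqA, hp0A]) (by rw [hcon, hp0s])
            have hlt : 0 < s0 - q.2 := by
              rcases lt_of_le_of_ne hle hne with h'
              linarith
            have : Filter.Tendsto (fun t => c q * (A + t) ^ (s0 - q.2))
                (nhdsWithin (-A) (Set.Ioi (-A))) (nhds 0) := by
              have := ((tendsto_rpow_zero hlt).comp (tendsto_add_Ioi A)).const_mul (c q)
              simpa using this
            apply Filter.Tendsto.congr' _ this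
            filter_upwards [self_mem_nhdsWithin] with t ht
            have hpos : 0 < A + t := hmemIoi t ht
            have h1 : (A + t) ^ s0 * (q.1 + t) ^ (-q.2) = (A + t) ^ (s0 - q.2) := by
              rw [hqA, ← Real.rpow_add hpos]
              ring_nf
            rw [mul_left_comm, h1]
          · -- q.1 > A
            have hgt : A < q.1 := lt_of_le_of_ne (hA_le q hq) (Ne.symm hqA)
            have h1 : Filter.Tendsto (fun t => (A + t) ^ s0)
                (nhdsWithin (-A) (Set.Ioi (-A))) (nhds 0) :=
              (tendsto_rpow_zero hs0_pos).comp (tendsto_add_Ioi A)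
            have h2 : Filter.Tendsto (fun t => c q * (q.1 + t) ^ (-q.2))
                (nhdsWithin (-A) (Set.Ioi (-A))) (nhds (c q * (q.1 + -A) ^ (-q.2))) := by
              apply Filter.Tendsto.const_mul
              have hcont : ContinuousAt (fun x : ℝ => x ^ (-q.2)) (q.1 + -A) :=
                Real.continuousAt_rpow_const _ _ (Or.inl (by linarith))
              have hadd : Filter.Tendsto (fun t : ℝ => q.1 + t)
                  (nhdsWithin (-A) (Set.Ioi (-A))) (nhds (q.1 + -A)) :=
                (Filter.tendsto_id.const_add q.1).mono_left nhdsWithin_le_nhds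
              exact hcont.tendsto.comp hadd
            have := h1.mul h2
            simpa using this
      rw [← hsum]
      apply hts.congr'
      filter_upwards [self_mem_nhdsWithin] with t _
      simp [hφdef, hgdef, Finset.mul_sum]
    have hφ0 : Filter.Tendsto φ (nhdsWithin (-A) (Set.Ioi (-A))) (nhds 0) := by
      apply Filter.Tendsto.congr' _ tendsto_const_nhds
      filter_upwards [self_mem_nhdsWithin] with t ht
      simp [hφdef, h0 ht]
    have hcp0 : c p0 = 0 := tendsto_nhds_unique hφlim hφ0
    -- induct on erased set
    have herase : ∀ q ∈ F.erase p0, c q = 0 := by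
      apply ih (F.erase p0) (Finset.erase_ssubset hp0F) c
        (fun q hq => ha q (Finset.mem_of_mem_erase hq))
        (fun q hq => hs q (Finset.mem_of_mem_erase hq))
      intro t ht
      have := h t ht
      rw [← Finset.add_sum_erase F _ hp0F] at this
      rw [hcp0] at this
      simpa using this
    by_cases hpp0 : p = p0
    · rw [hpp0]; exact hcp0
    · exact herase p (Finset.mem_erase.2 ⟨hpp0, hp⟩)

/-- Student-t density with location `m`, scale `σ`, degrees of freedom `ν`. -/
noncomputable def studentT (m σ ν y : ℝ) : ℝ :=
  Real.Gamma ((ν + 1) / 2) / (Real.Gamma (ν / 2) * σ * Real.sqrt (ν * Real.pi)) *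
    (1 + ((y - m) / σ) ^ 2 / ν) ^ (-((ν + 1) / 2))


/-- The constant in front of the translated Student-t density. -/
noncomputable def stKc (σ ν : ℝ) : ℝ :=
  Real.Gamma ((ν + 1) / 2) / (Real.Gamma (ν / 2) * σ * Real.sqrt (ν * Real.pi)) *
    (σ ^ 2 * ν) ^ ((ν + 1) / 2)

lemma stKc_pos {σ ν : ℝ} (hσ : 0 < σ) (hν : 0 < ν) : 0 < stKc σ ν := by
  unfold stKc
  apply mul_pos
  · apply div_pos (Real.Gamma_pos_of_pos (by linarith))
    apply mul_pos (mul_pos (Real.Gamma_pos_of_pos (by linarith)) hσ)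
    exact Real.sqrt_pos.2 (by positivity)
  · exact Real.rpow_pos_of_pos (by positivity) _

lemma studentT_eq {σ ν : ℝ} (m : ℝ) (hσ : 0 < σ) (hν : 0 < ν) (y : ℝ) :
    studentT m σ ν y = stKc σ ν * (σ ^ 2 * ν + (y - m) ^ 2) ^ (-((ν + 1) / 2)) := by
  have hb : (0:ℝ) < σ ^ 2 * ν := by positivity
  have hx : (0:ℝ) < σ ^ 2 * ν + (y - m) ^ 2 := by positivity
  have h1 : 1 + ((y - m) / σ) ^ 2 / ν = (σ ^ 2 * ν + (y - m) ^ 2) / (σ ^ 2 * ν) := by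
    field_simp
  rw [studentT, stKc, h1, Real.div_rpow hx.le hb.le, Real.rpow_neg hb.le]
  field_simp

lemma pm_inj {σ1 ν1 σ2 ν2 : ℝ} (hσ1 : 0 < σ1) (hν1 : 0 < ν1) (hσ2 : 0 < σ2)
    (h1 : σ1 ^ 2 * ν1 = σ2 ^ 2 * ν2) (h2 : (ν1 + 1) / 2 = (ν2 + 1) / 2) :
    σ1 = σ2 ∧ ν1 = ν2 := by
  have hν : ν1 = ν2 := by linarith
  subst hν
  refine ⟨?_, rfl⟩
  have hsq : σ1 ^ 2 = σ2 ^ 2 := mul_right_cancel₀ (ne_of_gt hν1) h1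
  nlinarith

theorem studentT_mixture_identifiable (R R' : ℕ) (m : ℝ)
    (w : Fin R → ℝ) (σ ν : Fin R → ℝ)
    (w' : Fin R' → ℝ) (σ' ν' : Fin R' → ℝ)
    (hw : ∀ r, 0 < w r) (hwsum : ∑ r, w r = 1)
    (hw' : ∀ r, 0 < w' r) (hwsum' : ∑ r, w' r = 1)
    (hσ : ∀ r, 0 < σ r) (hν : ∀ r, 0 < ν r)
    (hσ' : ∀ r, 0 < σ' r) (hν' : ∀ r, 0 < ν' r)
    (hdist : Function.Injective (fun r => (σ r, ν r)))
    (hdist' : Function.Injective (fun r => (σ' r, ν' r)))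
    (heq : ∀ y : ℝ, ∑ r, w r * studentT m (σ r) (ν r) y =
      ∑ r, w' r * studentT m (σ' r) (ν' r) y) :
    R = R' ∧ ∃ e : Fin R' ≃ Fin R,
      ∀ r, w' r = w (e r) ∧ σ' r = σ (e r) ∧ ν' r = ν (e r) := by
  classical
  set u : Fin R → ℝ × ℝ := fun r => (σ r ^ 2 * ν r, (ν r + 1) / 2) with hudef
  set u' : Fin R' → ℝ × ℝ := fun r => (σ' r ^ 2 * ν' r, (ν' r + 1) / 2) with hu'def
  have hu_inj : Function.Injective u := by
    intro r1 r2 h12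
    apply hdist
    obtain ⟨e1, e2⟩ := pm_inj (hσ r1) (hν r1) (hσ r2)
      (congrArg Prod.fst h12) (congrArg Prod.snd h12)
    simp [e1, e2]
  have hu'_inj : Function.Injective u' := by
    intro r1 r2 h12
    apply hdist'
    obtain ⟨e1, e2⟩ := pm_inj (hσ' r1) (hν' r1) (hσ' r2)
      (congrArg Prod.fst h12) (congrArg Prod.snd h12)
    simp [e1, e2]
  set P : Finset (ℝ × ℝ) := (Finset.univ.image u) ∪ (Finset.univ.image u') with hPdef
  have hmemP : ∀ r, u r ∈ P := fun r =>
    Finset.mem_union_left _ (Finset.mem_image_of_mem u (Finset.mem_univ r))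
  have hmemP' : ∀ r, u' r ∈ P := fun r =>
    Finset.mem_union_right _ (Finset.mem_image_of_mem u' (Finset.mem_univ r))
  set c : ℝ × ℝ → ℝ := fun p =>
    (∑ r ∈ Finset.univ.filter (fun r => u r = p), w r * stKc (σ r) (ν r)) -
    (∑ r ∈ Finset.univ.filter (fun r => u' r = p), w' r * stKc (σ' r) (ν' r)) with hcdef
  have ha : ∀ p ∈ P, 0 < p.1 := by
    intro p hp
    rcases Finset.mem_union.1 hp with hp | hp <;>
      obtain ⟨r, -, rfl⟩ := Finset.mem_image.1 hp
    · have := hσ r; have := hν r; positivity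
    · have := hσ' r; have := hν' r; positivity
  have hsP : ∀ p ∈ P, 0 < p.2 := by
    intro p hp
    rcases Finset.mem_union.1 hp with hp | hp <;>
      obtain ⟨r, -, rfl⟩ := Finset.mem_image.1 hp
    · have := hν r; simp only [hudef]; linarith
    · have := hν' r; simp only [hu'def]; linarith
  have hzero : ∀ t : ℝ, 0 ≤ t → ∑ p ∈ P, c p * (p.1 + t) ^ (-p.2) = 0 := by
    intro t ht
    set y := m + Real.sqrt t with hydef
    have hy : (y - m) ^ 2 = t := by
      rw [hydef]; simp [Real.sq_sqrt ht]
    have key : ∀ (n : ℕ) (v : Fin n → ℝ × ℝ) (ww ss nn : Fin n → ℝ),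
        (∀ r, v r = (ss r ^ 2 * nn r, (nn r + 1) / 2)) →
        (∀ r, 0 < ss r) → (∀ r, 0 < nn r) →
        (∀ r, v r ∈ P) →
        (∑ p ∈ P, (∑ r ∈ Finset.univ.filter (fun r => v r = p), ww r * stKc (ss r) (nn r)) *
          (p.1 + t) ^ (-p.2)) = ∑ r, ww r * studentT m (ss r) (nn r) y := by
      intro n v ww ss nn hv hss hnn hmem
      calc ∑ p ∈ P, (∑ r ∈ Finset.univ.filter (fun r => v r = p),
              ww r * stKc (ss r) (nn r)) * (p.1 + t) ^ (-p.2)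
          = ∑ p ∈ P, ∑ r ∈ Finset.univ.filter (fun r => v r = p),
              ww r * stKc (ss r) (nn r) * ((v r).1 + t) ^ (-(v r).2) := by
            refine Finset.sum_congr rfl fun p hp => ?_
            rw [Finset.sum_mul]
            refine Finset.sum_congr rfl fun r hr => ?_
            rw [(Finset.mem_filter.1 hr).2]
        _ = ∑ r, ww r * stKc (ss r) (nn r) * ((v r).1 + t) ^ (-(v r).2) :=
            Finset.sum_fiberwise_of_maps_to (fun r _ => hmem r) _
        _ = ∑ r, ww r * studentT m (ss r) (nn r) y := by
            refine Finset.sum_congr rfl fun r _ => ?_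
            rw [studentT_eq m (hss r) (hnn r) y, hv r, ← hy, mul_assoc]
    have hsub : ∑ p ∈ P, c p * (p.1 + t) ^ (-p.2) =
        (∑ p ∈ P, (∑ r ∈ Finset.univ.filter (fun r => u r = p),
          w r * stKc (σ r) (ν r)) * (p.1 + t) ^ (-p.2)) -
        (∑ p ∈ P, (∑ r ∈ Finset.univ.filter (fun r => u' r = p),
          w' r * stKc (σ' r) (ν' r)) * (p.1 + t) ^ (-p.2)) := by
      rw [← Finset.sum_sub_distrib]
      exact Finset.sum_congr rfl fun p _ => by simp only [hcdef]; rw [sub_mul]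
    rw [hsub, key R u w σ ν (fun r => rfl) hσ hν hmemP,
      key R' u' w' σ' ν' (fun r => rfl) hσ' hν' hmemP', heq y, sub_self]
  have hc := rpow_indep P c ha hsP hzero
  -- matching
  have key1 : ∀ r : Fin R, ∃ r' : Fin R',
      σ' r' = σ r ∧ ν' r' = ν r ∧ w' r' = w r := by
    intro r
    have h0 := hc (u r) (hmemP r)
    simp only [hcdef] at h0
    have hfil : Finset.univ.filter (fun r2 => u r2 = u r) = {r} := by
      ext r2
      simp only [Finset.mem_filter, Finset.mem_univ, true_and, Finset.mem_singleton]
      exact ⟨fun h => hu_inj h, fun h => by rw [h]⟩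
    rw [hfil, Finset.sum_singleton] at h0
    have hne : (Finset.univ.filter (fun r2 => u' r2 = u r)).Nonempty := by
      by_contra hcon
      rw [Finset.not_nonempty_iff_eq_empty] at hcon
      rw [hcon, Finset.sum_empty, sub_zero] at h0
      exact absurd h0 (ne_of_gt (mul_pos (hw r) (stKc_pos (hσ r) (hν r))))
    obtain ⟨r', hr'⟩ := hne
    have hur' : u' r' = u r := (Finset.mem_filter.1 hr').2
    have hfil' : Finset.univ.filter (fun r2 => u' r2 = u r) = {r'} := by
      ext r2
      simp only [Finset.mem_filter, Finset.mem_univ, true_and, Finset.mem_singleton]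
      refine ⟨fun h => hu'_inj (h.trans hur'.symm), fun h => by rw [h]; exact hur'⟩
    rw [hfil', Finset.sum_singleton, sub_eq_zero] at h0
    obtain ⟨e1, e2⟩ := pm_inj (hσ' r') (hν' r') (hσ r)
      (congrArg Prod.fst hur') (congrArg Prod.snd hur')
    refine ⟨r', e1, e2, ?_⟩
    rw [e1, e2] at h0
    exact mul_right_cancel₀ (ne_of_gt (stKc_pos (hσ r) (hν r))) h0.symm
  have key2 : ∀ r' : Fin R', ∃ r : Fin R,
      σ r = σ' r' ∧ ν r = ν' r' ∧ w r = w' r' := by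
    intro r'
    have h0 := hc (u' r') (hmemP' r')
    simp only [hcdef] at h0
    have hfil' : Finset.univ.filter (fun r2 => u' r2 = u' r') = {r'} := by
      ext r2
      simp only [Finset.mem_filter, Finset.mem_univ, true_and, Finset.mem_singleton]
      exact ⟨fun h => hu'_inj h, fun h => by rw [h]⟩
    rw [hfil', Finset.sum_singleton] at h0
    have hne : (Finset.univ.filter (fun r2 => u r2 = u' r')).Nonempty := by
      by_contra hcon
      rw [Finset.not_nonempty_iff_eq_empty] at hcon
      rw [hcon, Finset.sum_empty, zero_sub, neg_eq_zero] at h0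
      exact absurd h0 (ne_of_gt (mul_pos (hw' r') (stKc_pos (hσ' r') (hν' r'))))
    obtain ⟨r, hr⟩ := hne
    have hur : u r = u' r' := (Finset.mem_filter.1 hr).2
    have hfil : Finset.univ.filter (fun r2 => u r2 = u' r') = {r} := by
      ext r2
      simp only [Finset.mem_filter, Finset.mem_univ, true_and, Finset.mem_singleton]
      refine ⟨fun h => hu_inj (h.trans hur.symm), fun h => by rw [h]; exact hur⟩
    rw [hfil, Finset.sum_singleton, sub_eq_zero] at h0
    obtain ⟨e1, e2⟩ := pm_inj (hσ r) (hν r) (hσ' r')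
      (congrArg Prod.fst hur) (congrArg Prod.snd hur)
    refine ⟨r, e1, e2, ?_⟩
    rw [e1, e2] at h0
    exact mul_right_cancel₀ (ne_of_gt (stKc_pos (hσ' r') (hν' r'))) h0
  choose ψ hψσ hψν hψw using key1
  choose ψ' hψ'σ hψ'ν hψ'w using key2
  have hli : Function.LeftInverse ψ ψ' := by
    intro r'
    apply hdist'
    show (σ' (ψ (ψ' r')), ν' (ψ (ψ' r'))) = (σ' r', ν' r')
    rw [hψσ (ψ' r'), hψν (ψ' r'), hψ'σ r', hψ'ν r']
  have hri : Function.RightInverse ψ ψ' := by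
    intro r
    apply hdist
    show (σ (ψ' (ψ r)), ν (ψ' (ψ r))) = (σ r, ν r)
    rw [hψ'σ (ψ r), hψ'ν (ψ r), hψσ r, hψν r]
  set e : Fin R' ≃ Fin R := ⟨ψ', ψ, hli, hri⟩ with hedef
  constructor
  · have := Fintype.card_congr e
    simpa using this.symm
  · refine ⟨e, fun r' => ?_⟩
    refine ⟨(hψ'w r').symm, (hψ'σ r').symm, (hψ'ν r').symm⟩
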